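/- Let V be a 3-dimensional real vector space with a nondegenerate symmetric bilinear form ⟨·,·⟩, and let C be a Cotton-like tensor on V. If the kernel D = {u ∈ V : C(u,·,·) = 0} contains a vector u with ⟨u,u⟩ ≠ 0, then C = 0. -/

import Mathlib

open Module LinearMap

/-- If the kernel of a Cotton-like tensor on a 3-dimensional pseudo-Euclidean
space contains a non-null vector, then the tensor vanishes. -/
theorem stmt11 {V : Type*} [AddCommGroup V] [Module ℝ V] [FiniteDimensional ℝ V]
    (hdim : Module.finrank ℝ V = 3)
    (B : V →ₗ[ℝ] V →ₗ[ℝ] ℝ)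
    (hBsymm : ∀ x y : V, B x y = B y x)
    (hBnondeg : ∀ x : V, (∀ y : V, B x y = 0) → x = 0)
    (C : V →ₗ[ℝ] V →ₗ[ℝ] V →ₗ[ℝ] ℝ)
    (hCanti : ∀ X Y Z : V, C X Y Z = - C Y X Z)
    (hCcyc : ∀ X Y Z : V, C X Y Z + C Y Z X + C Z X Y = 0)
    (hCtrace : ∀ (Y : V) (T : V →ₗ[ℝ] V),
      (∀ X Z : V, B (T X) Z = C X Y Z) → LinearMap.trace ℝ V T = 0)
    (u : V) (hu : ∀ Y Z : V, C u Y Z = 0) (hnonnull : B u u ≠ 0) :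
    C = 0 := by
  have hu2 : ∀ X Z : V, C X u Z = 0 := fun X Z => by rw [hCanti]; simp [hu]
  have hu3 : ∀ X Y : V, C X Y u = 0 := fun X Y => by
    have h := hCcyc X Y u
    have h1 := hu X Y
    have h2 := hu2 Y X
    linarith
  have hune : u ≠ 0 := fun h => hnonnull (by simp [h])
  set N : Submodule ℝ V := Submodule.span ℝ {u} with hNdef
  set W : Submodule ℝ V := LinearMap.BilinForm.orthogonal B N with hWdef
  have hcompl : IsCompl N W :=
    LinearMap.BilinForm.isCompl_span_singleton_orthogonal hnonnull
  have hN1 : finrank ℝ N = 1 := finrank_span_singleton hune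
  have hsum := Submodule.finrank_add_eq_of_isCompl hcompl
  rw [hdim, hN1] at hsum
  have hW2 : finrank ℝ W = 2 := by omega
  let bW : Basis (Fin 2) ℝ W := finBasisOfFinrankEq ℝ W hW2
  set e : V := (bW 0 : V) with hedef
  set f : V := (bW 1 : V) with hfdef
  have hortho : ∀ x : V, x ∈ W → B u x = 0 := fun x hx => by
    rw [hWdef, LinearMap.BilinForm.mem_orthogonal_iff] at hx
    exact hx u (Submodule.mem_span_singleton_self u)
  have hBue : B u e = 0 := hortho e (bW 0).2
  have hBuf : B u f = 0 := hortho f (bW 1).2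
  -- basis of V
  have hWspan : Submodule.span ℝ (Set.range (fun i => (bW i : V))) = W := by
    have h : Submodule.map W.subtype (Submodule.span ℝ (Set.range bW)) = W := by
      rw [bW.span_eq, Submodule.map_top, Submodule.range_subtype]
    rwa [Submodule.map_span, ← Set.range_comp] at h
  have htop : ⊤ ≤ Submodule.span ℝ (Set.range ![u, e, f]) := by
    rw [← hcompl.sup_eq_top]
    apply sup_le
    · rw [hNdef]
      apply Submodule.span_mono
      intro x hx
      rcases hx with rfl
      exact ⟨0, rfl⟩
    · rw [← hWspan]
      apply Submodule.span_mono
      rintro x ⟨i, rfl⟩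
      fin_cases i
      · exact ⟨1, rfl⟩
      · exact ⟨2, rfl⟩
  let b : Basis (Fin 3) ℝ V := basisOfTopLeSpanOfCardEqFinrank ![u, e, f] htop
    (by simp [hdim])
  have hb : ⇑b = ![u, e, f] := coe_basisOfTopLeSpanOfCardEqFinrank _ _ _
  have hb0 : b 0 = u := by rw [hb]; rfl
  have hb1 : b 1 = e := by rw [hb]; rfl
  have hb2 : b 2 = f := by rw [hb]; rfl
  have hrep : ∀ X : V, X = b.repr X 0 • u + b.repr X 1 • e + b.repr X 2 • f := fun X => by
    have h := b.sum_repr X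
    rw [Fin.sum_univ_three, hb0, hb1, hb2] at h
    exact h.symm
  have hCee : ∀ Z, C e e Z = 0 := fun Z => by
    have := hCanti e e Z; linarith
  have hCff : ∀ Z, C f f Z = 0 := fun Z => by
    have := hCanti f f Z; linarith
  have key : ∀ X Y Z : V,
      C X Y Z = (b.repr X 1 * b.repr Y 2 - b.repr X 2 * b.repr Y 1) * C e f Z := by
    intro X Y Z
    conv_lhs => rw [hrep X, hrep Y]
    simp only [map_add, map_smul, LinearMap.add_apply, LinearMap.smul_apply, smul_eq_mul,
      hu, hu2, hCee, hCff, hCanti f e Z]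
    ring
  have hBnd : LinearMap.BilinForm.Nondegenerate B :=
    ⟨hBnondeg, fun y hy => hBnondeg y (fun x => by rw [hBsymm]; exact hy x)⟩
  set w : V := (LinearMap.BilinForm.toDual B hBnd).symm (C e f) with hwdef
  have hw : ∀ Z : V, B w Z = C e f Z := fun Z => by
    have h : LinearMap.BilinForm.toDual B hBnd w = C e f :=
      (LinearMap.BilinForm.toDual B hBnd).apply_symm_apply _
    rw [← LinearMap.BilinForm.toDual_def (B := B) (b := hBnd), h]
  -- trace condition
  have htr : ∀ Y : V, b.repr Y 2 * b.repr w 1 - b.repr Y 1 * b.repr w 2 = 0 := by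
    intro Y
    set l : V →ₗ[ℝ] ℝ := b.repr Y 2 • (b.coord 1) - b.repr Y 1 • (b.coord 2) with hldef
    have hl : ∀ X : V, l X = b.repr X 1 * b.repr Y 2 - b.repr X 2 * b.repr Y 1 := fun X => by
      simp [hldef, Basis.coord_apply]; ring
    set T : V →ₗ[ℝ] V := dualTensorHom ℝ V V (l ⊗ₜ[ℝ] w) with hTdef
    have hT := hCtrace Y T (fun X Z => by
      rw [hTdef, dualTensorHom_apply, map_smul, LinearMap.smul_apply, smul_eq_mul, hw,
        key X Y Z, hl])
    rw [hTdef, LinearMap.trace_eq_contract_apply, contractLeft_apply, hl] at hT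
    linarith
  have hw1 : b.repr w 1 = 0 := by
    have h := htr f
    rw [← hb2, b.repr_self] at h
    simpa using h
  have hw2 : b.repr w 2 = 0 := by
    have h := htr e
    rw [← hb1, b.repr_self] at h
    simpa using h
  have hCef : ∀ Z : V, C e f Z = 0 := by
    intro Z
    have hwu : w = b.repr w 0 • u := by
      have h := hrep w
      rw [hw1, hw2] at h
      simpa using h
    have hB : ∀ Z : V, C e f Z = b.repr w 0 * B u Z := fun Z => by
      conv_lhs => rw [← hw Z, hwu]
      rw [map_smul, LinearMap.smul_apply, smul_eq_mul]
    have hCefe : C e f e = 0 := by rw [hB, hBue, mul_zero]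
    have hCeff : C e f f = 0 := by rw [hB, hBuf, mul_zero]
    conv_lhs => rw [hrep Z]
    simp [hu3, hCefe, hCeff]
  ext X Y Z
  rw [key X Y Z, hCef Z]
  simp
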